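/- Let N be a positive integer, Δ a natural number, and s : Fin N → ℕ a vector of spike times. The temporal Δ-perturbation set ε(s, Δ) = { s̃ : Fin N → ℕ | ∑_{n=0}^{N−1} |(s̃(n) : ℤ) − (s(n) : ℤ)| ≤ Δ } is finite and its cardinality is at most C(N + Δ − 1, Δ) · (1 + 2·Δ/N)^N (as a real-number bound), where C denotes the binomial coefficient. In particular, this bound is independent of the number of time steps T. -/

import Mathlib

open Finset

namespace Stmt10Aux

/-- partial sum of absolute values over indices `< j` -/
def q {N : ℕ} (d : Fin N → ℤ) (j : ℕ) : ℕ :=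
  ∑ m ∈ Finset.univ.filter (fun m : Fin N => (m : ℕ) < j), (d m).natAbs

lemma q_zero {N : ℕ} (d : Fin N → ℤ) : q d 0 = 0 := by
  simp [q]

lemma q_succ {N : ℕ} (d : Fin N → ℤ) {j : ℕ} (hj : j < N) :
    q d (j + 1) = q d j + (d ⟨j, hj⟩).natAbs := by
  unfold q
  have h : Finset.univ.filter (fun m : Fin N => (m : ℕ) < j + 1)
      = insert ⟨j, hj⟩ (Finset.univ.filter (fun m : Fin N => (m : ℕ) < j)) := by
    ext m
    simp only [Finset.mem_filter, Finset.mem_univ, true_and, Finset.mem_insert, Fin.ext_iff]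
    omega
  rw [h, Finset.sum_insert (by simp)]
  ring

lemma q_mono {N : ℕ} (d : Fin N → ℤ) {j j' : ℕ} (h : j ≤ j') : q d j ≤ q d j' := by
  apply Finset.sum_le_sum_of_subset
  intro m hm
  simp only [Finset.mem_filter, Finset.mem_univ, true_and] at hm ⊢
  omega

lemma q_total {N : ℕ} (d : Fin N → ℤ) : q d N = ∑ m, (d m).natAbs := by
  unfold q
  congr 1
  ext m
  simp [m.isLt]

lemma q_stable {N : ℕ} (d : Fin N → ℤ) {j : ℕ} (hj : N ≤ j) : q d (j + 1) = q d j := by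
  unfold q
  congr 1
  ext m
  simp only [Finset.mem_filter, Finset.mem_univ, true_and]
  have := m.isLt
  omega

variable {N Δ : ℕ}

/-- the encoding of magnitudes as a set of partial sums -/
def Φ (σ d : Fin N → ℤ) : Finset ℕ :=
  (Finset.univ.filter (fun n => ¬ σ n = 0)).image (fun n : Fin N => q d ((n : ℕ) + 1))

lemma abs_le_aux (σ d e : Fin N → ℤ)
    (sd : ∀ n, (d n).sign = σ n) (se : ∀ n, (e n).sign = σ n)
    {j : ℕ} (hj : j < N) (hσ : ¬ σ ⟨j, hj⟩ = 0)
    (ih : q d j = q e j) (hΦ : Φ σ d = Φ σ e) :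
    (d ⟨j, hj⟩).natAbs ≤ (e ⟨j, hj⟩).natAbs := by
  by_contra hlt
  push_neg at hlt
  set n : Fin N := ⟨j, hj⟩ with hn
  have hen : e n ≠ 0 := fun h => hσ (by rw [← se n, h, Int.sign_zero])
  have hepos : 1 ≤ (e n).natAbs := Int.natAbs_pos.mpr hen
  -- q e (j+1) is in Φ σ e = Φ σ d
  have hmem : q e (j + 1) ∈ Φ σ d := by
    rw [hΦ]
    exact Finset.mem_image.mpr ⟨n, Finset.mem_filter.mpr ⟨Finset.mem_univ _, hσ⟩, rfl⟩
  obtain ⟨m, hm, hqm⟩ := Finset.mem_image.mp hmem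
  have hqe : q e (j + 1) = q e j + (e n).natAbs := q_succ e hj
  have hqd : q d (j + 1) = q d j + (d n).natAbs := q_succ d hj
  rcases lt_or_ge (m : ℕ) j with hmj | hmj
  · have h1 : q d ((m : ℕ) + 1) ≤ q d j := q_mono d (by omega)
    omega
  · have h1 : q d (j + 1) ≤ q d ((m : ℕ) + 1) := q_mono d (by omega)
    omega

lemma choose_mono_aux (hN : 0 < N) {k D : ℕ} (hk : k ≤ D) :
    (N + k - 1).choose k ≤ (N + D - 1).choose D := by
  induction D with
  | zero =>
    have : k = 0 := by omega
    simp [this]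
  | succ d ih =>
    rcases Nat.lt_or_ge k (d + 1) with h | h
    · have h1 : (N + k - 1).choose k ≤ (N + d - 1).choose d := ih (by omega)
      have h2 : N + (d + 1) - 1 = (N + d - 1) + 1 := by omega
      calc (N + k - 1).choose k ≤ (N + d - 1).choose d := h1
        _ ≤ (N + d - 1).choose d + (N + d - 1).choose (d + 1) := Nat.le_add_right _ _
        _ = (N + (d + 1) - 1).choose (d + 1) := by rw [h2, Nat.choose_succ_succ]
    · have : k = d + 1 := by omega
      subst this
      exact le_refl _

lemma key_nat (hN : 0 < N) (k D : ℕ) :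
    D.choose k * N ^ k ≤ (N + D - 1).choose D * D ^ k := by
  rcases le_or_gt k D with hk | hk
  · have h1 : D.choose k * Nat.factorial k ≤ D ^ k := by
      rw [mul_comm, ← Nat.descFactorial_eq_factorial_mul_choose]
      exact Nat.descFactorial_le_pow _ _
    have h2 : N ^ k ≤ Nat.factorial k * (N + k - 1).choose k := by
      rw [← Nat.ascFactorial_eq_factorial_mul_choose']
      exact Nat.pow_succ_le_ascFactorial N k
    have h3 : (N + k - 1).choose k ≤ (N + D - 1).choose D := choose_mono_aux hN hk
    have : D.choose k * N ^ k * Nat.factorial k ≤ (N + D - 1).choose D * D ^ k * Nat.factorial k := by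
      calc D.choose k * N ^ k * Nat.factorial k = (D.choose k * Nat.factorial k) * N ^ k := by ring
        _ ≤ D ^ k * (Nat.factorial k * (N + k - 1).choose k) := Nat.mul_le_mul h1 h2
        _ ≤ D ^ k * (Nat.factorial k * (N + D - 1).choose D) :=
            Nat.mul_le_mul_left _ (Nat.mul_le_mul_left _ h3)
        _ = (N + D - 1).choose D * D ^ k * Nat.factorial k := by ring
    exact Nat.le_of_mul_le_mul_right this (Nat.factorial_pos k)
  · simp [Nat.choose_eq_zero_of_lt hk]

lemma key_real (hN : 0 < N) (k D : ℕ) :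
    (D.choose k : ℝ) ≤ ((N + D - 1).choose D : ℝ) * ((D : ℝ) / N) ^ k := by
  have h := key_nat hN k D
  have hNpos : (0 : ℝ) < (N : ℝ) ^ k := by positivity
  rw [div_pow, ← mul_div_assoc, le_div_iff₀ hNpos]
  exact_mod_cast h

end Stmt10Aux

open Stmt10Aux

set_option maxHeartbeats 1600000 in

/-- For spike times `s : Fin N → ℕ`, the temporal `Δ`-perturbation set
`ε(s, Δ) = {s̃ | ∑ n, |s̃ n − s n| ≤ Δ}` is finite, with cardinality at most
`C(N + Δ − 1, Δ) · (1 + 2Δ/N)^N` (as a real number) — a bound independent of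
the number of time steps `T`. -/
theorem stmt_10 (N : ℕ) (hN : 0 < N) (Δ : ℕ) (s : Fin N → ℕ) :
    {t : Fin N → ℕ | ∑ n, |(t n : ℤ) - (s n : ℤ)| ≤ (Δ : ℤ)}.Finite ∧
      ({t : Fin N → ℕ | ∑ n, |(t n : ℤ) - (s n : ℤ)| ≤ (Δ : ℤ)}.ncard : ℝ) ≤
        ((N + Δ - 1).choose Δ : ℝ) * (1 + 2 * (Δ : ℝ) / N) ^ N := by
  set S := {t : Fin N → ℕ | ∑ n, |(t n : ℤ) - (s n : ℤ)| ≤ (Δ : ℤ)} with hS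
  clear_value S
  -- coordinatewise bounds
  have hcoord : ∀ t ∈ S, ∀ n, |(t n : ℤ) - (s n : ℤ)| ≤ (Δ : ℤ) := by
    intro t ht n
    rw [hS] at ht
    simp only [Set.mem_setOf_eq] at ht
    refine le_trans ?_ ht
    exact Finset.single_le_sum (f := fun m => |(t m : ℤ) - (s m : ℤ)|) (fun m _ => abs_nonneg _) (Finset.mem_univ n)
  -- finiteness
  have hfin : S.Finite := by
    apply Set.Finite.subset (Set.Finite.pi (fun n : Fin N => Set.finite_Iic (s n + Δ)))
    intro t ht
    simp only [Set.mem_pi, Set.mem_univ, Set.mem_Iic, forall_true_left]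
    intro n
    have := hcoord t ht n
    rw [abs_le] at this
    omega
  refine ⟨hfin, ?_⟩
  classical
  -- the integer ball
  set B : Finset (Fin N → ℤ) :=
    (Fintype.piFinset fun _ : Fin N => Finset.Icc (-(Δ : ℤ)) (Δ : ℤ)).filter
      (fun d => ∑ n, |d n| ≤ (Δ : ℤ)) with hB
  clear_value B
  -- step 1 : |S| ≤ |B|
  have step1 : S.ncard ≤ B.card := by
    rw [Set.ncard_eq_toFinset_card S hfin]
    apply Finset.card_le_card_of_injOn (fun t n => (t n : ℤ) - (s n : ℤ))
    · intro t ht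
      rw [Finset.mem_coe, Set.Finite.mem_toFinset] at ht
      have hts := ht
      rw [hS] at hts
      simp only [Set.mem_setOf_eq] at hts
      rw [Finset.mem_coe, hB, Finset.mem_filter]
      constructor
      · rw [Fintype.mem_piFinset]
        intro n
        have := hcoord t ht n
        rw [abs_le] at this
        simp only [Finset.mem_Icc]
        exact this
      · exact hts
    · intro t ht t' ht' h
      funext n
      have := congrFun h n
      simp only at this
      omega
  -- sign vectors
  set Sg3 : Finset (Fin N → ℤ) := Fintype.piFinset fun _ : Fin N => ({-1, 0, 1} : Finset ℤ)
    with hSg3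
  clear_value Sg3
  set kk : (Fin N → ℤ) → ℕ := fun σ => (Finset.univ.filter (fun n => ¬ σ n = 0)).card with hkk
  clear_value kk
  -- step 2 : fiberwise decomposition
  have hsgn : ∀ d ∈ B, (fun n => (d n).sign) ∈ Sg3 := by
    intro d _
    rw [hSg3, Fintype.mem_piFinset]
    intro n
    rcases lt_trichotomy (d n) 0 with h | h | h <;>
      simp [Int.sign_eq_neg_one_iff_neg.mpr, Int.sign_eq_one_iff_pos.mpr, h]
  -- step 3 : each fiber has at most Δ.choose (kk σ) elements
  have step3 : ∀ σ ∈ Sg3,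
      (B.filter fun d => (fun n => (d n).sign) = σ).card ≤ Δ.choose (kk σ) := by
    intro σ hσ
    have hcard : ((Finset.Icc 1 Δ).powersetCard (kk σ)).card = Δ.choose (kk σ) := by
      rw [Finset.card_powersetCard, Nat.card_Icc]
      simp
    rw [← hcard]
    apply Finset.card_le_card_of_injOn (Φ σ)
    · -- maps to powersetCard
      intro d hd
      rw [Finset.mem_coe, Finset.mem_filter] at hd
      obtain ⟨hdB, hds⟩ := hd
      have sd : ∀ n, (d n).sign = σ n := fun n => congrFun hds n
      rw [hB, Finset.mem_filter] at hdB
      have hsum : ∑ m, (d m).natAbs ≤ Δ := by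
        have h := hdB.2
        have h2 : ((∑ m, (d m).natAbs : ℕ) : ℤ) ≤ (Δ : ℤ) := by
          push_cast
          exact h
        exact_mod_cast h2
      rw [Finset.mem_coe, Finset.mem_powersetCard]
      constructor
      · intro x hx
        obtain ⟨n, hn, hqn⟩ := Finset.mem_image.mp hx
        rw [Finset.mem_filter] at hn
        have hdn : d n ≠ 0 := fun h => hn.2 (by rw [← sd n, h, Int.sign_zero])
        have h1 : 1 ≤ (d n).natAbs := Int.natAbs_pos.mpr hdn
        have hq1 : q d ((n : ℕ) + 1) = q d (n : ℕ) + (d n).natAbs := by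
          have := q_succ d n.isLt
          simpa using this
        have hq2 : q d ((n : ℕ) + 1) ≤ q d N := q_mono d (by omega)
        rw [q_total] at hq2
        rw [Finset.mem_Icc, ← hqn]
        omega
      · -- card of image
        rw [hkk]
        apply Finset.card_image_of_injOn
        intro n hn m hm hnm
        simp only [Finset.mem_coe, Finset.mem_filter] at hn hm
        have hdn : d n ≠ 0 := fun h => hn.2 (by rw [← sd n, h, Int.sign_zero])
        have hdm : d m ≠ 0 := fun h => hm.2 (by rw [← sd m, h, Int.sign_zero])
        by_contra hne
        have key : ∀ a b : Fin N, d b ≠ 0 → (a : ℕ) < (b : ℕ) →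
            q d ((a : ℕ) + 1) < q d ((b : ℕ) + 1) := by
          intro a b hb hab
          have h1 : q d ((a : ℕ) + 1) ≤ q d (b : ℕ) := q_mono d (by omega)
          have h2 : q d ((b : ℕ) + 1) = q d (b : ℕ) + (d b).natAbs := by
            have := q_succ d b.isLt
            simpa using this
          have := Int.natAbs_pos.mpr hb
          omega
        rcases lt_trichotomy ((n : ℕ)) ((m : ℕ)) with h | h | h
        · exact absurd hnm (Nat.ne_of_lt (key n m hdm h))
        · exact hne (Fin.ext h)
        · exact absurd hnm.symm (Nat.ne_of_lt (key m n hdn h))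
    · -- injectivity of Φ on the fiber
      intro d hd e he hΦde
      simp only [Finset.mem_coe, Finset.mem_filter] at hd he
      have sd : ∀ n, (d n).sign = σ n := fun n => congrFun hd.2 n
      have se : ∀ n, (e n).sign = σ n := fun n => congrFun he.2 n
      have hq : ∀ j, q d j = q e j := by
        intro j
        induction j with
        | zero => rw [q_zero, q_zero]
        | succ j ih =>
          by_cases hj : j < N
          · rw [q_succ d hj, q_succ e hj, ih]
            by_cases hσn : σ ⟨j, hj⟩ = 0
            · have hd0 : d ⟨j, hj⟩ = 0 := by
                have := sd ⟨j, hj⟩; rw [hσn] at this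
                exact Int.sign_eq_zero_iff_zero.mp this
              have he0 : e ⟨j, hj⟩ = 0 := by
                have := se ⟨j, hj⟩; rw [hσn] at this
                exact Int.sign_eq_zero_iff_zero.mp this
              rw [hd0, he0]
            · have h1 := abs_le_aux σ d e sd se hj hσn ih hΦde
              have h2 := abs_le_aux σ e d se sd hj hσn ih.symm hΦde.symm
              omega
          · rw [q_stable d (by omega), q_stable e (by omega), ih]
      funext n
      have h1 : q d ((n : ℕ) + 1) = q d (n : ℕ) + (d n).natAbs := by
        have := q_succ d n.isLt; simpa using this
      have h2 : q e ((n : ℕ) + 1) = q e (n : ℕ) + (e n).natAbs := by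
        have := q_succ e n.isLt; simpa using this
      have habs : (d n).natAbs = (e n).natAbs := by
        have ha := hq ((n : ℕ) + 1)
        have hb := hq (n : ℕ)
        omega
      have : (d n).sign = (e n).sign := by rw [sd n, se n]
      calc d n = (d n).sign * (d n).natAbs := (Int.sign_mul_natAbs (d n)).symm
        _ = (e n).sign * (e n).natAbs := by rw [this, habs]
        _ = e n := Int.sign_mul_natAbs (e n)
  have step2 : B.card = ∑ σ ∈ Sg3, (B.filter fun d => (fun n => (d n).sign) = σ).card :=
    Finset.card_eq_sum_card_fiberwise hsgn
  -- assemble the nat bound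
  have hnat : S.ncard ≤ ∑ σ ∈ Sg3, Δ.choose (kk σ) := by
    calc S.ncard ≤ B.card := step1
      _ = ∑ σ ∈ Sg3, (B.filter fun d => (fun n => (d n).sign) = σ).card := step2
      _ ≤ ∑ σ ∈ Sg3, Δ.choose (kk σ) := Finset.sum_le_sum step3
  -- pass to the reals
  have hreal : ((∑ σ ∈ Sg3, Δ.choose (kk σ) : ℕ) : ℝ) ≤
      ((N + Δ - 1).choose Δ : ℝ) * (1 + 2 * (Δ : ℝ) / N) ^ N := by
    push_cast
    have hterm : ∀ σ ∈ Sg3, ((Δ.choose (kk σ)) : ℝ) ≤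
        ((N + Δ - 1).choose Δ : ℝ) * ((Δ : ℝ) / N) ^ (kk σ) :=
      fun σ _ => key_real hN (kk σ) Δ
    calc (∑ σ ∈ Sg3, ((Δ.choose (kk σ)) : ℝ))
        ≤ ∑ σ ∈ Sg3, ((N + Δ - 1).choose Δ : ℝ) * ((Δ : ℝ) / N) ^ (kk σ) :=
          Finset.sum_le_sum hterm
      _ = ((N + Δ - 1).choose Δ : ℝ) * ∑ σ ∈ Sg3, ((Δ : ℝ) / N) ^ (kk σ) := by
          rw [Finset.mul_sum]
      _ = ((N + Δ - 1).choose Δ : ℝ) * (1 + 2 * (Δ : ℝ) / N) ^ N := by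
          congr 1
          rw [hSg3]
          have hprod : ∀ σ : Fin N → ℤ,
              ((Δ : ℝ) / N) ^ (kk σ) = ∏ n, (if σ n = 0 then (1 : ℝ) else (Δ : ℝ) / N) := by
            intro σ
            rw [Finset.prod_ite (fun _ => (1:ℝ)) (fun _ => (Δ:ℝ)/N), Finset.prod_const,
              Finset.prod_const, one_pow, one_mul, hkk]
          calc (∑ σ ∈ Fintype.piFinset fun _ : Fin N => ({-1, 0, 1} : Finset ℤ),
                ((Δ : ℝ) / N) ^ (kk σ))
              = ∑ σ ∈ Fintype.piFinset fun _ : Fin N => ({-1, 0, 1} : Finset ℤ),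
                ∏ n, (if σ n = 0 then (1 : ℝ) else (Δ : ℝ) / N) :=
                Finset.sum_congr rfl (fun σ _ => hprod σ)
            _ = ∏ n : Fin N, ∑ v ∈ ({-1, 0, 1} : Finset ℤ),
                  (if v = 0 then (1 : ℝ) else (Δ : ℝ) / N) :=
                (Finset.prod_univ_sum (fun _ : Fin N => ({-1, 0, 1} : Finset ℤ))
                  (fun _ v => if v = 0 then (1 : ℝ) else (Δ : ℝ) / N)).symm
            _ = (1 + 2 * (Δ : ℝ) / N) ^ N := by
                have hsum : ∑ v ∈ ({-1, 0, 1} : Finset ℤ),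
                    (if v = 0 then (1 : ℝ) else (Δ : ℝ) / N) = 1 + 2 * (Δ : ℝ) / N := by
                  rw [show ({-1, 0, 1} : Finset ℤ) = insert (-1) (insert 0 {1}) from rfl,
                    Finset.sum_insert (by norm_num), Finset.sum_insert (by norm_num),
                    Finset.sum_singleton]
                  norm_num
                  ring
                rw [hsum, Finset.prod_const, Finset.card_univ, Fintype.card_fin]
  calc (S.ncard : ℝ) ≤ ((∑ σ ∈ Sg3, Δ.choose (kk σ) : ℕ) : ℝ) := by exact_mod_cast hnat
    _ ≤ ((N + Δ - 1).choose Δ : ℝ) * (1 + 2 * (Δ : ℝ) / N) ^ N := hreal
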